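/- Let G be a graph of order n ≥ 2 with m edges. Then the signless Laplacian spectral radius satisfies γ(G) ≤ 2m/(n-1) + n - 2. -/

import Mathlib

open scoped Classical
open Finset

lemma arithN (d k P B R : ℕ) (hP : P ≤ d * (d + 1)) (hB : B ≤ d * k) :
    (d + k) * (P + B) ≤ (P + 2 * B + R) * d + d * (d + k) * k := by
  rcases Nat.eq_zero_or_pos d with hd | hd
  · subst hd; simp_all
  rcases le_or_gt k d with hk | hk
  · rcases Nat.eq_zero_or_pos k with hk0 | hk0
    · subst hk0; simp_all; nlinarith
    · nlinarith
  · nlinarith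

lemma key_nat (n : ℕ) (G : SimpleGraph (Fin n)) (u : Fin n) :
    ∃ k : ℕ, G.degree u + 1 + k = n ∧
      (G.degree u + k) * (G.degree u + ∑ w ∈ G.neighborFinset u, G.degree w) ≤
        2 * G.edgeFinset.card * G.degree u + G.degree u * (G.degree u + k) * k := by
  classical
  set d := G.degree u with hd
  set C : Finset (Fin n) := insert u (G.neighborFinset u) with hC
  have hCcard : C.card = d + 1 := by
    rw [hC, card_insert_of_notMem (SimpleGraph.notMem_neighborFinset_self G u)]
    rfl
  refine ⟨Cᶜ.card, ?_, ?_⟩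
  · have := Finset.card_add_card_compl C
    simp [hCcard, Fintype.card_fin] at this
    omega
  set k := Cᶜ.card with hk
  set e : Fin n → Fin n → ℕ := fun x y => if G.Adj x y then 1 else 0 with he
  have hdeg : ∀ w, G.degree w = ∑ y, e w y := by
    intro w
    rw [SimpleGraph.degree, SimpleGraph.neighborFinset_eq_filter, Finset.card_filter]
  set P := ∑ x ∈ C, ∑ y ∈ C, e x y with hP
  set B := ∑ x ∈ C, ∑ y ∈ Cᶜ, e x y with hB
  set R := ∑ x ∈ Cᶜ, ∑ y ∈ Cᶜ, e x y with hR
  have hsplit : ∀ w, G.degree w = ∑ y ∈ C, e w y + ∑ y ∈ Cᶜ, e w y := by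
    intro w
    rw [hdeg w, ← Finset.sum_add_sum_compl C]
  have hsumC : ∑ w ∈ C, G.degree w = P + B := by
    rw [hP, hB, ← Finset.sum_add_distrib]
    exact Finset.sum_congr rfl fun w _ => hsplit w
  have hB' : ∑ x ∈ Cᶜ, ∑ y ∈ C, e x y = B := by
    rw [hB, Finset.sum_comm]
    refine Finset.sum_congr rfl fun x _ => Finset.sum_congr rfl fun y _ => ?_
    simp [he, G.adj_comm]
  have hsumCc : ∑ w ∈ Cᶜ, G.degree w = B + R := by
    rw [hR, ← hB', ← Finset.sum_add_distrib]
    exact Finset.sum_congr rfl fun w _ => hsplit w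
  have h2m : 2 * G.edgeFinset.card = P + 2 * B + R := by
    have := G.sum_degrees_eq_twice_card_edges
    rw [← Finset.sum_add_sum_compl C (fun v => G.degree v), hsumC, hsumCc] at this
    omega
  have hPle : P ≤ (d + 1) * d := by
    calc P ≤ ∑ _x ∈ C, d := by
          refine Finset.sum_le_sum fun x hx => ?_
          have : ∑ y ∈ C, e x y = (C.filter (G.Adj x)).card := by
            rw [Finset.card_filter]
          rw [this]
          calc (C.filter (G.Adj x)).card ≤ (C.erase x).card := by
                refine Finset.card_le_card fun y hy => ?_
                simp only [Finset.mem_filter] at hy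
                exact Finset.mem_erase.mpr ⟨(G.ne_of_adj hy.2).symm, hy.1⟩
            _ ≤ d := by
                rw [Finset.card_erase_of_mem hx, hCcard]
                omega
      _ = (d + 1) * d := by rw [Finset.sum_const, hCcard, smul_eq_mul]
  have hBle : B ≤ d * k := by
    rw [hB, hC, Finset.sum_insert (SimpleGraph.notMem_neighborFinset_self G u)]
    have h1 : ∑ y ∈ Cᶜ, e u y = 0 := by
      refine Finset.sum_eq_zero fun y hy => ?_
      have hyC : y ∉ C := Finset.mem_compl.mp hy
      have : ¬ G.Adj u y := fun h => hyC (by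
        rw [hC]; exact Finset.mem_insert_of_mem ((SimpleGraph.mem_neighborFinset G u y).mpr h))
      simp [he, this]
    rw [hC] at h1
    rw [h1, zero_add]
    calc ∑ x ∈ G.neighborFinset u, ∑ y ∈ Cᶜ, e x y ≤ ∑ _x ∈ G.neighborFinset u, k := by
          refine Finset.sum_le_sum fun x _ => ?_
          calc ∑ y ∈ Cᶜ, e x y ≤ ∑ _y ∈ Cᶜ, 1 :=
                Finset.sum_le_sum fun y _ => by simp only [he]; split <;> omega
            _ = k := by rw [Finset.sum_const, smul_eq_mul, mul_one, hk]
      _ = d * k := by rw [Finset.sum_const, smul_eq_mul]; rfl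
  have harith := arithN d k P B R (by linarith [hPle]) hBle
  have hCsum' : ∑ w ∈ C, G.degree w = d + ∑ w ∈ G.neighborFinset u, G.degree w := by
    rw [hC, Finset.sum_insert (SimpleGraph.notMem_neighborFinset_self G u)]
  rw [h2m]
  rw [hCsum'] at hsumC
  rw [hsumC]
  exact harith

lemma key_real (n : ℕ) (hn : 2 ≤ n) (G : SimpleGraph (Fin n)) (u : Fin n) :
    ((G.degree u : ℝ))^2 + ∑ w ∈ G.neighborFinset u, ((G.degree w : ℝ)) ≤
      (2 * (G.edgeFinset.card : ℝ) / ((n : ℝ) - 1) + (n : ℝ) - 2) * (G.degree u : ℝ) := by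
  obtain ⟨k, hkn, hineq⟩ := key_nat n G u
  have hn1 : (0:ℝ) < (n:ℝ) - 1 := by
    have : (2:ℝ) ≤ (n:ℝ) := by exact_mod_cast hn
    linarith
  have hdk : ((G.degree u : ℝ)) + 1 + (k:ℝ) = (n:ℝ) := by exact_mod_cast hkn
  have h1 : ((G.degree u : ℝ) + (k:ℝ)) * ((G.degree u : ℝ) + ∑ w ∈ G.neighborFinset u, ((G.degree w : ℝ))) ≤
      2 * (G.edgeFinset.card : ℝ) * (G.degree u : ℝ)
        + (G.degree u : ℝ) * ((G.degree u : ℝ) + (k:ℝ)) * (k:ℝ) := by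
    exact_mod_cast hineq
  have hk' : (k:ℝ) = (n:ℝ) - 1 - (G.degree u : ℝ) := by linarith
  rw [hk'] at h1
  have hK : ((n:ℝ)-1) * ((2 * (G.edgeFinset.card : ℝ) / ((n : ℝ) - 1) + (n : ℝ) - 2) * (G.degree u : ℝ))
      = 2 * (G.edgeFinset.card : ℝ) * (G.degree u : ℝ) + ((n:ℝ)-1)*((n:ℝ)-2)*(G.degree u : ℝ) := by
    field_simp
    ring
  have h2 : ((n:ℝ)-1) * (((G.degree u : ℝ))^2 + ∑ w ∈ G.neighborFinset u, ((G.degree w : ℝ))) ≤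
      ((n:ℝ)-1) * ((2 * (G.edgeFinset.card : ℝ) / ((n : ℝ) - 1) + (n : ℝ) - 2) * (G.degree u : ℝ)) := by
    rw [hK]
    nlinarith [h1]
  exact le_of_mul_le_mul_left h2 hn1

/-- For a graph of order n ≥ 2 with m edges, the signless Laplacian spectral radius
satisfies γ(G) ≤ 2m/(n-1) + n - 2. -/
theorem signless_laplacian_radius_bound (n : ℕ) (hn : 2 ≤ n) (G : SimpleGraph (Fin n)) (γ : ℝ)
    (hγ : IsGreatest {x : ℝ | ∃ f : Fin n → ℝ, f ≠ 0 ∧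
      (Matrix.diagonal (fun v => (G.degree v : ℝ)) + G.adjMatrix ℝ).mulVec f = x • f} γ) :
    γ ≤ 2 * (G.edgeFinset.card : ℝ) / ((n : ℝ) - 1) + (n : ℝ) - 2 := by
  obtain ⟨⟨f, hf0, hfQ⟩, -⟩ := hγ
  set Q : Matrix (Fin n) (Fin n) ℝ :=
    Matrix.diagonal (fun v => (G.degree v : ℝ)) + G.adjMatrix ℝ with hQdef
  set K : ℝ := 2 * (G.edgeFinset.card : ℝ) / ((n : ℝ) - 1) + (n : ℝ) - 2 with hKdef
  have hn1 : (0:ℝ) < (n:ℝ) - 1 := by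
    have : (2:ℝ) ≤ (n:ℝ) := by exact_mod_cast hn
    linarith
  have hK0 : 0 ≤ K := by
    have h1 : 0 ≤ 2 * (G.edgeFinset.card : ℝ) / ((n : ℝ) - 1) := by positivity
    have h2 : (2:ℝ) ≤ (n:ℝ) := by exact_mod_cast hn
    rw [hKdef]; linarith
  show γ ≤ K
  refine le_of_forall_pos_le_add fun ε hε => ?_
  set c : ℝ := ε / 2 with hc
  have hc0 : 0 < c := by positivity
  set t : Fin n → ℝ := fun v => (G.degree v : ℝ) + c with ht
  have ht0 : ∀ v, 0 < t v := fun v => by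
    have : (0:ℝ) ≤ (G.degree v : ℝ) := Nat.cast_nonneg _
    rw [ht]; dsimp only; linarith
  obtain ⟨u, -, hu⟩ := Finset.exists_max_image Finset.univ (fun v => |f v| / t v)
    ⟨⟨0, by omega⟩, Finset.mem_univ _⟩
  have hgu : 0 < |f u| := by
    obtain ⟨v, hv⟩ := Function.ne_iff.mp hf0
    have h1 : 0 < |f v| / t v := div_pos (abs_pos.mpr hv) (ht0 v)
    have h2 : 0 < |f u| / t u := lt_of_lt_of_le h1 (hu v (Finset.mem_univ v))
    have h3 : |f u| = (|f u| / t u) * t u := by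
      field_simp [(ht0 u).ne']
    rw [h3]; exact mul_pos h2 (ht0 u)
  have Qnn : ∀ v w, 0 ≤ Q v w := by
    intro v w
    rw [hQdef]
    simp only [Matrix.add_apply, Matrix.diagonal_apply, SimpleGraph.adjMatrix_apply]
    have h1 : (0:ℝ) ≤ (if v = w then (G.degree v : ℝ) else 0) := by positivity
    have h2 : (0:ℝ) ≤ (if G.Adj v w then (1:ℝ) else 0) := by positivity
    linarith
  have hmv : ∀ (g : Fin n → ℝ), Q.mulVec g u = ∑ w, Q u w * g w := by
    intro g
    simp [Matrix.mulVec, dotProduct]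
  have heq : ∑ w, Q u w * f w = γ * f u := by
    rw [← hmv, hfQ]; rfl
  have hfw : ∀ w, |f w| ≤ (|f u| / t u) * t w := by
    intro w
    have := hu w (Finset.mem_univ w)
    exact (div_le_iff₀ (ht0 w)).mp this
  have step1 : γ * |f u| ≤ ∑ w, Q u w * |f w| := by
    have h1 : γ * |f u| ≤ |γ * f u| := by
      rw [abs_mul]
      exact mul_le_mul_of_nonneg_right (le_abs_self γ) (abs_nonneg _)
    have h3 : |∑ w, Q u w * f w| ≤ ∑ w, |Q u w * f w| := Finset.abs_sum_le_sum_abs _ _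
    have h4 : ∑ w, |Q u w * f w| = ∑ w, Q u w * |f w| := by
      refine Finset.sum_congr rfl fun w _ => ?_
      rw [abs_mul, abs_of_nonneg (Qnn u w)]
    rw [heq] at h3
    linarith
  have step2 : ∑ w, Q u w * |f w| ≤ (|f u| / t u) * Q.mulVec t u := by
    rw [hmv t, Finset.mul_sum]
    refine Finset.sum_le_sum fun w _ => ?_
    calc Q u w * |f w| ≤ Q u w * ((|f u| / t u) * t w) :=
          mul_le_mul_of_nonneg_left (hfw w) (Qnn u w)
      _ = |f u| / t u * (Q u w * t w) := by ring
  have hQt : Q.mulVec t u = (G.degree u : ℝ) * t u + ∑ w ∈ G.neighborFinset u, t w := by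
    rw [hQdef, Matrix.add_mulVec]
    simp only [Pi.add_apply]
    rw [Matrix.mulVec_diagonal, SimpleGraph.adjMatrix_mulVec_apply]
  have hsumt : ∑ w ∈ G.neighborFinset u, t w
      = (∑ w ∈ G.neighborFinset u, (G.degree w : ℝ)) + c * (G.degree u : ℝ) := by
    rw [ht]
    rw [Finset.sum_add_distrib, Finset.sum_const, nsmul_eq_mul]
    rw [SimpleGraph.degree]
    ring
  have hkey := key_real n hn G u
  rw [← hKdef] at hkey
  have hZ : Q.mulVec t u ≤ (K + 2 * c) * t u := by
    rw [hQt, hsumt, ht]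
    dsimp only
    have hd0 : (0:ℝ) ≤ (G.degree u : ℝ) := Nat.cast_nonneg _
    nlinarith [hkey, mul_nonneg hK0 hc0.le, sq_nonneg c]
  have step3 : (|f u| / t u) * Q.mulVec t u ≤ (|f u| / t u) * ((K + 2 * c) * t u) := by
    refine mul_le_mul_of_nonneg_left hZ ?_
    positivity
  have hfin : (|f u| / t u) * ((K + 2 * c) * t u) = (K + 2 * c) * |f u| := by
    field_simp [(ht0 u).ne']
  have : γ * |f u| ≤ (K + 2 * c) * |f u| := by
    rw [← hfin]
    linarith
  have hγle : γ ≤ K + 2 * c := le_of_mul_le_mul_right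
    (by linarith [this] : γ * |f u| ≤ (K + 2 * c) * |f u|) hgu
  calc γ ≤ K + 2 * c := hγle
    _ = K + ε := by rw [hc]; ring
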